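/- Let N ≥ 1, κ ∈ ℝ, b₁, …, b_N ∈ ℝ, and let q, q' ∈ (0,∞)^N, p, p' ∈ ℝ^N satisfy bₖ ≤ qₖ²·q'ₖ² and the discrete Smorodinsky–Winternitz update equations q'ₖ·√(1 − bₖ/(qₖ²·q'ₖ²)) + pₖ = κ·qₖ and p'ₖ = qₖ·√(1 − bₖ/(qₖ²·q'ₖ²)) for each k = 1, …, N. Then the function H₁(q,p) = (1/2)·Σₖ [pₖ² + bₖ/qₖ² + qₖ² − κ·qₖ·pₖ] is invariant: H₁(q', p') = H₁(q, p). -/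

import Mathlib

open Finset

theorem dSW_energy_invariant (N : ℕ) (hN : 1 ≤ N) (κ : ℝ) (b : Fin N → ℝ)
    (q q' p p' : Fin N → ℝ)
    (hq : ∀ k, 0 < q k) (hq' : ∀ k, 0 < q' k)
    (hb : ∀ k, b k ≤ (q k) ^ 2 * (q' k) ^ 2)
    (hup1 : ∀ k, q' k * Real.sqrt (1 - b k / ((q k) ^ 2 * (q' k) ^ 2)) + p k = κ * q k)
    (hup2 : ∀ k, p' k = q k * Real.sqrt (1 - b k / ((q k) ^ 2 * (q' k) ^ 2))) :
    (1 / 2) * ∑ k, ((p' k) ^ 2 + b k / (q' k) ^ 2 + (q' k) ^ 2 - κ * q' k * p' k)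
      = (1 / 2) * ∑ k, ((p k) ^ 2 + b k / (q k) ^ 2 + (q k) ^ 2 - κ * q k * p k) := by
  congr 1
  apply Finset.sum_congr rfl
  intro k _
  have hqk := hq k
  have hq'k := hq' k
  have hqq : (0:ℝ) < (q k) ^ 2 * (q' k) ^ 2 := by positivity
  set s := Real.sqrt (1 - b k / ((q k) ^ 2 * (q' k) ^ 2)) with hs
  have hnn : (0:ℝ) ≤ 1 - b k / ((q k) ^ 2 * (q' k) ^ 2) := by
    rw [sub_nonneg, div_le_one hqq]; exact hb k
  have hs2 : s ^ 2 = 1 - b k / ((q k) ^ 2 * (q' k) ^ 2) := Real.sq_sqrt hnn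
  have hbk : b k = (1 - s ^ 2) * ((q k) ^ 2 * (q' k) ^ 2) := by
    rw [hs2]; field_simp; ring
  have hp : p k = κ * q k - q' k * s := by linarith [hup1 k]
  rw [hup2 k, hp, hbk]
  field_simp
  rw [sub_sub_cancel, Real.sqrt_sq (show (0:ℝ) ≤ s from Real.sqrt_nonneg _)]
  ring
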